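/- If W ⊆ K^E is a finite-dimensional subspace and #E < #S(K), then the set T(W) of supports of elements of W is closed under arbitrary unions: any union of supports of elements of W is again the support of some element of W. -/

import Mathlib

universe u

open Cardinal Polynomial in
lemma key_exists {K V ι : Type u} [Field K] [AddCommGroup V] [Module K V]
    [FiniteDimensional K V] (φ : ι → (V →ₗ[K] K))
    (hφ : ∀ i, φ i ≠ 0) (hcard : Cardinal.mk ι < Cardinal.mk K + 1) :
    ∃ v : V, ∀ i, φ i v ≠ 0 := by
  classical
  cases isEmpty_or_nonempty ι with
  | inl h => exact ⟨0, fun i => (h.false i).elim⟩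
  | inr hne =>
  have hsurj : ∀ i, Function.Surjective (φ i) := by
    intro i c
    obtain ⟨v0, hv0⟩ : ∃ v, φ i v ≠ 0 := by
      by_contra h
      push_neg at h
      exact hφ i (LinearMap.ext h)
    exact ⟨(c / φ i v0) • v0, by
      rw [map_smul, smul_eq_mul, div_mul_cancel₀ _ hv0]⟩
  have hrank : ∀ i, 1 + Module.finrank K (LinearMap.ker (φ i)) = Module.finrank K V := by
    intro i
    have h := LinearMap.finrank_range_add_finrank_ker (φ i)
    rwa [LinearMap.range_eq_top.mpr (hsurj i), finrank_top, Module.finrank_self] at h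
  by_cases hK : Finite K
  · -- finite field: counting argument
    haveI : Fintype K := Fintype.ofFinite K
    haveI : Finite V := Module.finite_of_finite K
    haveI : Fintype V := Fintype.ofFinite V
    haveI : Finite ι := by
      have h1 : Cardinal.mk K + 1 < Cardinal.aleph0 :=
        Cardinal.add_lt_aleph0 (Cardinal.lt_aleph0_of_finite K) Cardinal.one_lt_aleph0
      exact Cardinal.lt_aleph0_iff_finite.mp (hcard.trans h1)
    haveI : Fintype ι := Fintype.ofFinite ι
    set q := Fintype.card K with hq
    set n := Module.finrank K V with hn
    set m := Fintype.card ι with hm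
    have hmq : m ≤ q := by
      have : (m : Cardinal) < (q : Cardinal) + 1 := by
        rwa [← Cardinal.mk_fintype, ← Cardinal.mk_fintype]
      rw [← Nat.cast_one, ← Nat.cast_add, Nat.cast_lt] at this
      omega
    have hq2 : 2 ≤ q := Fintype.one_lt_card
    have hkercard : ∀ i, Fintype.card (LinearMap.ker (φ i)) = q ^ (n - 1) := by
      intro i
      rw [Module.card_eq_pow_finrank (K := K)]
      congr 1
      have := hrank i
      omega
    set S : ι → Finset V := fun i => Finset.univ.filter (fun v => φ i v = 0) with hS
    have hScard : ∀ i, (S i).card = q ^ (n - 1) := by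
      intro i
      have e1 : (S i).card = Fintype.card {v : V // φ i v = 0} :=
        (Fintype.card_subtype _).symm
      have e2 : Fintype.card {v : V // φ i v = 0} = Fintype.card (LinearMap.ker (φ i)) :=
        Fintype.card_congr (Equiv.subtypeEquivRight fun v => (LinearMap.mem_ker (f := φ i)).symm)
      rw [e1, e2, hkercard i]
    set bad : Finset V := Finset.univ.filter (fun v => ∃ i, φ i v = 0) with hbad
    have hzero : ∀ i, (0 : V) ∈ S i := by
      intro i; simp [hS]
    have hsubset : bad ⊆ insert (0 : V) (Finset.univ.biUnion fun i => (S i).erase 0) := by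
      intro v hv
      rw [hbad, Finset.mem_filter] at hv
      obtain ⟨-, i, hi⟩ := hv
      rcases eq_or_ne v 0 with rfl | hv0
      · exact Finset.mem_insert_self _ _
      · refine Finset.mem_insert_of_mem (Finset.mem_biUnion.mpr ⟨i, Finset.mem_univ _, ?_⟩)
        exact Finset.mem_erase.mpr ⟨hv0, by simp [hS, hi]⟩
    have hbadcard : bad.card ≤ 1 + m * (q ^ (n - 1) - 1) := by
      calc bad.card ≤ (insert (0 : V) (Finset.univ.biUnion fun i => (S i).erase 0)).card :=
            Finset.card_le_card hsubset
        _ ≤ (Finset.univ.biUnion fun i => (S i).erase 0).card + 1 := Finset.card_insert_le _ _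
        _ ≤ (∑ i, ((S i).erase 0).card) + 1 := by
            exact Nat.add_le_add_right (Finset.card_biUnion_le) 1
        _ = (∑ i : ι, (q ^ (n - 1) - 1)) + 1 := by
            congr 1
            refine Finset.sum_congr rfl fun i _ => ?_
            rw [Finset.card_erase_of_mem (hzero i), hScard i]
        _ = m * (q ^ (n - 1) - 1) + 1 := by
            rw [Finset.sum_const, Finset.card_univ, smul_eq_mul, hm]
        _ = 1 + m * (q ^ (n - 1) - 1) := by omega
    have hcardV : Fintype.card V = q ^ n := Module.card_eq_pow_finrank (K := K)
    have hn1 : 1 ≤ n := by have := hrank (Classical.arbitrary ι); omega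
    have keyineq : ∀ a b c : ℕ, 2 ≤ a → 1 ≤ c → b ≤ a → 1 + b * (c - 1) < a * c := by
      intro a b c ha hc hb
      have h1 : b * (c - 1) ≤ a * (c - 1) := Nat.mul_le_mul_right _ hb
      have h2 : a * c = a * (c - 1) + a := by
        conv_lhs => rw [show c = (c - 1) + 1 by omega]
        rw [Nat.mul_add, Nat.mul_one]
      omega
    have hlt : bad.card < Fintype.card V := by
      rw [hcardV]
      calc bad.card ≤ 1 + m * (q ^ (n - 1) - 1) := hbadcard
        _ < q * q ^ (n - 1) := keyineq q m _ hq2 (Nat.one_le_pow _ _ (by omega)) hmq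
        _ = q ^ n := by
            conv_rhs => rw [show n = 1 + (n - 1) by omega]
            rw [pow_add, pow_one]
    have : ∃ v : V, v ∉ bad := by
      by_contra h
      push_neg at h
      have : bad = Finset.univ := Finset.eq_univ_iff_forall.mpr h
      rw [this, Finset.card_univ] at hlt
      exact lt_irrefl _ hlt
    obtain ⟨v, hv⟩ := this
    refine ⟨v, fun i hi => hv ?_⟩
    rw [hbad, Finset.mem_filter]
    exact ⟨Finset.mem_univ _, i, hi⟩
  · -- infinite field: polynomial argument
    haveI : Infinite K := not_finite_iff_infinite.mp hK
    rw [Cardinal.add_one_eq (Cardinal.aleph0_le_mk K)] at hcard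
    set n := Module.finrank K V with hn
    let b : Module.Basis (Fin n) K V := Module.finBasis K V
    set P : ι → Polynomial K := fun i => ∑ j : Fin n, Polynomial.monomial (j : ℕ) (φ i (b j))
      with hP
    have hPcoeff : ∀ i (j : Fin n), (P i).coeff (j : ℕ) = φ i (b j) := by
      intro i j
      rw [hP]
      rw [Polynomial.finset_sum_coeff]
      rw [Finset.sum_eq_single j]
      · rw [Polynomial.coeff_monomial, if_pos rfl]
      · intro k _ hk
        rw [Polynomial.coeff_monomial, if_neg (fun h => hk (Fin.val_injective h))]
      · simp
    have hPne : ∀ i, P i ≠ 0 := by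
      intro i h
      apply hφ i
      apply b.ext
      intro j
      rw [← hPcoeff i j, h]
      simp
    set B : Set K := ⋃ i, {t | (P i).IsRoot t} with hB
    have hBfin : ∀ i, {t | (P i).IsRoot t}.Finite := fun i =>
      Polynomial.finite_setOf_isRoot (hPne i)
    have hex : ∃ t : K, t ∉ B := by
      by_cases hι : Finite ι
      · have : B.Finite := Set.finite_iUnion hBfin
        obtain ⟨t, ht⟩ := (this.infinite_compl).nonempty
        exact ⟨t, ht⟩
      · haveI : Infinite ι := not_finite_iff_infinite.mp hι
        have hlt : Cardinal.mk B < Cardinal.mk K := by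
          have h1 : Cardinal.mk B ≤ Cardinal.mk ι * ⨆ i, Cardinal.mk {t | (P i).IsRoot t} :=
            Cardinal.mk_iUnion_le _
          have h2 : (⨆ i, Cardinal.mk {t | (P i).IsRoot t}) ≤ Cardinal.aleph0 := by
            apply ciSup_le'
            intro i
            haveI := (hBfin i).countable.to_subtype
            exact Cardinal.mk_le_aleph0
          have h3 : Cardinal.mk ι * Cardinal.aleph0 = Cardinal.mk ι := by
            rw [Cardinal.mul_eq_max (Cardinal.aleph0_le_mk ι) le_rfl]
            exact max_eq_left (Cardinal.aleph0_le_mk ι)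
          calc Cardinal.mk B ≤ Cardinal.mk ι * Cardinal.aleph0 :=
                h1.trans (mul_le_mul_right h2 _)
            _ = Cardinal.mk ι := h3
            _ < Cardinal.mk K := hcard
        by_contra h
        push_neg at h
        have : B = Set.univ := Set.eq_univ_iff_forall.mpr h
        rw [this, Cardinal.mk_univ] at hlt
        exact lt_irrefl _ hlt
    obtain ⟨t, ht⟩ := hex
    refine ⟨∑ j : Fin n, t ^ (j : ℕ) • b j, fun i => ?_⟩
    have heval : φ i (∑ j : Fin n, t ^ (j : ℕ) • b j) = (P i).eval t := by
      rw [map_sum, hP, Polynomial.eval_finset_sum]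
      refine Finset.sum_congr rfl fun j _ => ?_
      rw [map_smul, smul_eq_mul, Polynomial.eval_monomial, mul_comm]
    rw [heval]
    intro hzero
    exact ht (Set.mem_iUnion.mpr ⟨i, hzero⟩)

theorem stmt14 {K E : Type u} [Field K] (W : Submodule K (E → K))
    (hfin : FiniteDimensional K W)
    (hcard : Cardinal.mk E < Cardinal.mk K + 1)
    (A : Set (Set E)) (hA : ∀ S ∈ A, ∃ w ∈ W, Function.support w = S) :
    ∃ w ∈ W, Function.support w = ⋃₀ A := by
  classical
  set U : Set E := ⋃₀ A with hU
  let Z : Submodule K (E → K) :=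
    { carrier := {f | ∀ x, x ∉ U → f x = 0}
      add_mem' := by intro a b ha hb x hx; simp only [Pi.add_apply, ha x hx, hb x hx, add_zero]
      zero_mem' := fun x _ => rfl
      smul_mem' := by intro c f hf x hx; simp only [Pi.smul_apply, hf x hx, smul_zero] }
  set W' : Submodule K (E → K) := W ⊓ Z with hW'
  haveI : FiniteDimensional K W' := Submodule.finiteDimensional_of_le inf_le_left
  let φ : U → (W' →ₗ[K] K) := fun x => (LinearMap.proj (x : E)).comp W'.subtype
  have hφ : ∀ x : U, φ x ≠ 0 := by
    intro x h
    obtain ⟨S, hSA, hxS⟩ := x.2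
    obtain ⟨w, hwW, hws⟩ := hA S hSA
    have hwZ : w ∈ Z := by
      intro y hy
      by_contra hwy
      exact hy (Set.mem_sUnion.mpr ⟨S, hSA, hws ▸ hwy⟩)
    have hwx : w x ≠ 0 := by
      rw [← hws] at hxS
      exact hxS
    have : φ x ⟨w, Submodule.mem_inf.mpr ⟨hwW, hwZ⟩⟩ = w x := rfl
    rw [h] at this
    exact hwx (by simpa using this.symm)
  have hcard' : Cardinal.mk U < Cardinal.mk K + 1 :=
    lt_of_le_of_lt (Cardinal.mk_set_le U) hcard
  obtain ⟨v, hv⟩ := key_exists φ hφ hcard'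
  have hvZ : (v : E → K) ∈ Z := (Submodule.mem_inf.mp v.2).2
  refine ⟨v, (Submodule.mem_inf.mp v.2).1, ?_⟩
  apply Set.eq_of_subset_of_subset
  · intro x hx
    by_contra hxU
    exact hx (hvZ x hxU)
  · intro x hx
    exact hv ⟨x, hx⟩
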